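/- Let (R,m,k) be a commutative Noetherian local ring of depth at most 1 and M a finitely generated reflexive R-module. If End_R(M) has a nonzero free R-module direct summand, then M has a nonzero free R-module direct summand. Consequently, if End_R(M) is a free R-module then M is a free R-module. -/

import Mathlib

open CategoryTheory

universe u v

/-- Depth at most one: `Hom_R(k,R) ≠ 0` or `Ext¹_R(k,R) ≠ 0`, where `k` is the residue
field of the local ring `R`. -/
def DepthLEOne (R : Type u) [CommRing R] [IsLocalRing R] : Prop :=
  Nontrivial (IsLocalRing.ResidueField R →ₗ[R] R) ∨
  Nontrivial (((Ext R (ModuleCat.{u} R) 1).obj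
    (Opposite.op (ModuleCat.of R (IsLocalRing.ResidueField R)))).obj (ModuleCat.of R R))

/-! ### Auxiliary algebraic lemmas -/

section KeyLemma

open IsLocalRing

variable {R : Type u} {M : Type v} [CommRing R] [IsLocalRing R]
  [AddCommGroup M] [Module R M]

theorem aux_torsionless [Module.IsReflexive R M] (m : M)
    (hm : ∀ f : M →ₗ[R] R, f m = 0) : m = 0 := by
  apply (Module.bijective_dual_eval R M).injective
  rw [map_zero]
  exact LinearMap.ext fun f => hm f

/-- The key algebraic lemma: if `M` is reflexive with no free summand witness
(`∀ f m, f m ∈ 𝔪`), but `End M` has a free summand (`π g = 1`), then the depth of `R`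
is at least two in the concrete sense below. -/
theorem aux_key [Module.IsReflexive R M]
    (hM : ∀ (f : M →ₗ[R] R) (m : M), f m ∈ maximalIdeal R)
    (π : Module.End R M →ₗ[R] R) (g : Module.End R M) (hπ : π g = 1) :
    (∀ φ : ResidueField R →ₗ[R] R, φ = 0) ∧
      (∀ ψ : maximalIdeal R →ₗ[R] R, ∃ r : R, ∀ a : maximalIdeal R, ψ a = r * (a : R)) := by
  constructor
  · intro φ
    have hxann : ∀ a : R, a ∈ maximalIdeal R → a * φ 1 = 0 := by
      intro a ha
      have h1 : a • (1 : ResidueField R) = 0 := by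
        rw [Algebra.smul_def, mul_one, IsLocalRing.ResidueField.algebraMap_eq]
        exact Ideal.Quotient.eq_zero_iff_mem.mpr ha
      calc a * φ 1 = a • φ 1 := (smul_eq_mul a (φ 1)).symm
        _ = φ (a • (1 : ResidueField R)) := (map_smul φ a 1).symm
        _ = 0 := by rw [h1, map_zero]
    have hxg : φ 1 • g = 0 := by
      apply LinearMap.ext; intro m
      apply aux_torsionless (R := R); intro f
      have h2 : f ((φ 1 • g) m) = f (g m) * φ 1 := by
        rw [LinearMap.smul_apply, map_smul, smul_eq_mul, mul_comm]
      rw [h2, hxann _ (hM f (g m))]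
    have hx0 : φ 1 = 0 := by
      have : π (φ 1 • g) = φ 1 := by rw [map_smul, hπ, smul_eq_mul, mul_one]
      rw [← this, hxg, map_zero]
    apply LinearMap.ext; intro z
    obtain ⟨r, rfl⟩ := IsLocalRing.residue_surjective (R := R) z
    have : residue R r = r • (1 : ResidueField R) := by
      rw [Algebra.smul_def, mul_one, IsLocalRing.ResidueField.algebraMap_eq]
    rw [this, map_smul, hx0, smul_zero, LinearMap.zero_apply]
  · intro ψ
    have hsub : ∀ (m : M) (f : M →ₗ[R] R), f (g m) ∈ maximalIdeal R := fun m f => hM f (g m)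
    let Φ : M →ₗ[R] Module.Dual R (Module.Dual R M) :=
      { toFun := fun m => ψ ∘ₗ LinearMap.codRestrict (maximalIdeal R)
          (Module.Dual.eval R M (g m)) (hsub m)
        map_add' := by
          intro m m'
          apply LinearMap.ext; intro f
          have h : (⟨f (g (m + m')), hsub (m + m') f⟩ : maximalIdeal R)
              = ⟨f (g m), hsub m f⟩ + ⟨f (g m'), hsub m' f⟩ := by
            apply Subtype.ext
            simp [map_add]
          simp only [LinearMap.comp_apply, LinearMap.add_apply, LinearMap.codRestrict_apply]
          show ψ ⟨f (g (m + m')), hsub (m + m') f⟩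
            = ψ ⟨f (g m), hsub m f⟩ + ψ ⟨f (g m'), hsub m' f⟩
          rw [h, map_add]
        map_smul' := by
          intro c m
          apply LinearMap.ext; intro f
          have h : (⟨f (g (c • m)), hsub (c • m) f⟩ : maximalIdeal R)
              = c • ⟨f (g m), hsub m f⟩ := by
            apply Subtype.ext
            simp [map_smul]
          simp only [LinearMap.comp_apply, LinearMap.smul_apply, RingHom.id_apply]
          show ψ ⟨f (g (c • m)), hsub (c • m) f⟩ = c • ψ ⟨f (g m), hsub m f⟩
          rw [h, map_smul] }
    let gψ : Module.End R M := ((Module.evalEquiv R M).symm.toLinearMap) ∘ₗ Φ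
    have hgψ : ∀ (f : Module.Dual R M) (m : M), f (gψ m) = ψ ⟨f (g m), hsub m f⟩ := by
      intro f m
      have h := Module.apply_evalEquiv_symm_apply (R := R) (M := M) f (Φ m)
      exact h
    have hkey : ∀ a : maximalIdeal R, (a : R) • gψ = ψ a • g := by
      intro a
      apply LinearMap.ext; intro m
      rw [← sub_eq_zero, ← LinearMap.sub_apply]
      apply aux_torsionless (R := R); intro f
      have e1 : (a : R) * ψ ⟨f (g m), hsub m f⟩ = f (g m) * ψ a := by
        rw [← smul_eq_mul (a := (a : R)), ← map_smul,
          ← smul_eq_mul (a := f (g m)), ← map_smul]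
        congr 1
        apply Subtype.ext
        simp [mul_comm]
      have h3 : f (((a : R) • gψ - ψ a • g) m) = (a : R) * f (gψ m) - ψ a * f (g m) := by
        simp [LinearMap.sub_apply, LinearMap.smul_apply, map_sub, map_smul, smul_eq_mul]
      rw [h3, hgψ f m, e1, mul_comm (ψ a) (f (g m)), sub_self]
    refine ⟨π gψ, fun a => ?_⟩
    have := congrArg π (hkey a)
    rw [map_smul, map_smul, hπ, smul_eq_mul, smul_eq_mul, mul_one] at this
    rw [← this, mul_comm]

end KeyLemma

/-! ### Vanishing of `Ext¹` -/

section Resolution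

open CategoryTheory Limits Projective

variable {C : Type*} [Category C] [Abelian C] [EnoughProjectives C]

/-- A projective resolution built from a chosen projective presentation `f : P₀ ⟶ Z`. -/
noncomputable def auxResComplex {P₀ Z : C} (f : P₀ ⟶ Z) : ChainComplex C ℕ :=
  ChainComplex.mk' P₀ (Projective.syzygies f) (Projective.d f)
    (fun g => ⟨_, Projective.d g, by exact (Category.assoc _ _ _).trans ((_ ≫= kernel.condition _).trans Limits.comp_zero)⟩)

lemma auxResComplex_d_1_0 {P₀ Z : C} (f : P₀ ⟶ Z) :
    (auxResComplex f).d 1 0 = Projective.d f := by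
  simp [auxResComplex]

lemma auxResComplex_exactAt_succ {P₀ Z : C} (f : P₀ ⟶ Z) (n : ℕ) :
    (auxResComplex f).ExactAt (n + 1) := by
  rw [HomologicalComplex.exactAt_iff' _ (n + 1 + 1) (n + 1) n (by simp) (by simp)]
  refine (ShortComplex.exact_iff_of_iso ?_).2 (exact_d_f ((auxResComplex f).d (n + 1) n))
  refine ShortComplex.isoMk (ChainComplex.mk'XIso P₀ (Projective.syzygies f) (Projective.d f)
    (fun g => ⟨_, Projective.d g, (Category.assoc _ _ _).trans ((_ ≫= kernel.condition _).trans Limits.comp_zero)⟩) n) (Iso.refl _) (Iso.refl _) ?_ ?_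
  · refine Eq.trans ?_ (Category.comp_id _).symm
    exact (ChainComplex.mk'_d P₀ (Projective.syzygies f) (Projective.d f)
    (fun g => ⟨_, Projective.d g, (Category.assoc _ _ _).trans ((_ ≫= kernel.condition _).trans Limits.comp_zero)⟩) n).symm
  · exact (Category.id_comp _).trans (Category.comp_id _).symm

/-- The projective resolution associated to a projective presentation. -/
noncomputable def auxResolution {P₀ Z : C} (f : P₀ ⟶ Z) [Projective P₀] [Epi f] :
    ProjectiveResolution Z where
  complex := auxResComplex f
  projective n := by
    obtain (_ | _ | _ | n) := n
    · exact (inferInstance : Projective P₀)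
    · apply Projective.projective_over
    · apply Projective.projective_over
    · apply Projective.projective_over
  π := (ChainComplex.toSingle₀Equiv _ _).symm ⟨f, by
        rw [auxResComplex_d_1_0]; exact (Category.assoc _ _ _).trans ((_ ≫= kernel.condition _).trans Limits.comp_zero)⟩
  quasiIso := ⟨fun n => by
    cases n with
    | zero =>
      rw [ChainComplex.quasiIsoAt₀_iff, ShortComplex.quasiIso_iff_of_zeros']
      · refine (ShortComplex.exact_and_epi_g_iff_of_iso ?_).2
          ⟨exact_d_f f, by dsimp; infer_instance⟩
        exact ShortComplex.isoMk (Iso.refl _) (Iso.refl _) (Iso.refl _)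
          (by dsimp; erw [Category.id_comp, Category.comp_id]; exact (auxResComplex_d_1_0 f).symm) (by dsimp; erw [Category.id_comp, Category.comp_id]; exact (ChainComplex.toSingle₀Equiv_symm_apply_f_zero (C := auxResComplex f) (X := Z) f _).symm)
      all_goals rfl
    | succ n =>
      rw [quasiIsoAt_iff_exactAt']
      · apply auxResComplex_exactAt_succ
      · apply ChainComplex.exactAt_succ_single_obj⟩

end Resolution

section ExtVanishing

open CategoryTheory Limits IsLocalRing

theorem aux_factor {R : Type u} [CommRing R] [IsLocalRing R]
    {P1 : Type*} [AddCommGroup P1] [Module R P1]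
    (hpsi : ∀ ψ : maximalIdeal R →ₗ[R] R, ∃ r : R, ∀ a : maximalIdeal R, ψ a = r * (a : R))
    (d φ : P1 →ₗ[R] R)
    (hd : ∀ y, d y ∈ maximalIdeal R)
    (hsurj : ∀ a ∈ maximalIdeal R, ∃ y, d y = a)
    (hker : ∀ x, d x = 0 → φ x = 0) :
    ∃ r : R, ∀ x, φ x = r * d x := by
  have hker' : ∀ x y, d x = d y → φ x = φ y := by
    intro x y h
    have h2 := hker (x - y) (by rw [map_sub, h, sub_self])
    rw [map_sub, sub_eq_zero] at h2
    exact h2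
  choose sec hsec using hsurj
  let ψ : maximalIdeal R →ₗ[R] R :=
    { toFun := fun a => φ (sec (a : R) a.2)
      map_add' := by
        intro a b
        rw [← map_add]
        apply hker'
        rw [map_add, hsec, hsec, hsec, Submodule.coe_add]
      map_smul' := by
        intro c a
        rw [RingHom.id_apply, ← map_smul]
        apply hker'
        rw [map_smul, hsec, hsec, SetLike.val_smul, smul_eq_mul] }
  obtain ⟨r, hr⟩ := hpsi ψ
  refine ⟨r, fun x => ?_⟩
  have hx : φ x = ψ ⟨d x, hd x⟩ := hker' _ _ (by rw [hsec])
  rw [hx, hr]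

theorem aux_ext_one_subsingleton (R : Type u) [CommRing R] [IsLocalRing R]
    (hpsi : ∀ ψ : maximalIdeal R →ₗ[R] R, ∃ r : R, ∀ a : maximalIdeal R, ψ a = r * (a : R)) :
    Subsingleton (((Ext R (ModuleCat.{u} R) 1).obj
      (Opposite.op (ModuleCat.of R (ResidueField R)))).obj (ModuleCat.of R R)) := by
  let kM : ModuleCat.{u} R := ModuleCat.of R (ResidueField R)
  let RM : ModuleCat.{u} R := ModuleCat.of R R
  let flin : R →ₗ[R] ResidueField R := Algebra.linearMap R (ResidueField R)
  let fres : RM ⟶ kM := ModuleCat.ofHom flin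
  have hfres_apply : ∀ x : R, fres x = residue R x := by
    intro x
    show algebraMap R (ResidueField R) x = residue R x
    rw [IsLocalRing.ResidueField.algebraMap_eq]
  have hsurj : Function.Surjective fres := by
    intro z
    obtain ⟨r, hr⟩ := IsLocalRing.residue_surjective (R := R) z
    exact ⟨r, by rw [hfres_apply, hr]⟩
  haveI : Epi fres := (ModuleCat.epi_iff_surjective fres).2 hsurj
  haveI : Projective RM := ModuleCat.projective_of_free (Module.Basis.singleton PUnit.{u+1} R)
  let P : ProjectiveResolution kM := auxResolution fres
  have hiso := P.isoExt (R := R) 1 RM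
  suffices h : Subsingleton ((P.complex.linearYonedaObj R RM).homology 1) by
    exact Equiv.subsingleton (hiso.toLinearEquiv.toEquiv)
  have hz : IsZero ((P.complex.linearYonedaObj R RM).homology 1) := by
    rw [← HomologicalComplex.exactAt_iff_isZero_homology]
    rw [HomologicalComplex.exactAt_iff' _ 0 1 2 (by simp) (by simp)]
    rw [ShortComplex.moduleCat_exact_iff]
    intro φ hφ
    let X := auxResComplex fres
    let dl : X.X 1 →ₗ[R] R := (X.d 1 0).hom
    let φl : X.X 1 →ₗ[R] R := (φ : X.X 1 ⟶ RM).hom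
    have hφ' : X.d 2 1 ≫ (φ : X.X 1 ⟶ RM) = 0 := hφ
    have hφ'el : ∀ z : X.X 2, φl (X.d 2 1 z) = 0 := by
      intro z
      have h := congrArg (fun (t : X.X 2 ⟶ RM) => t z) hφ'
      exact h
    have hex1 := auxResComplex_exactAt_succ fres 0
    rw [HomologicalComplex.exactAt_iff' _ 2 1 0 (by simp) (by simp),
      ShortComplex.moduleCat_exact_iff] at hex1
    have hex0 := CategoryTheory.exact_d_f fres
    rw [ShortComplex.moduleCat_exact_iff] at hex0
    have hcomp : ∀ y : X.X 1, fres (dl y) = 0 := by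
      intro y
      have h : X.d 1 0 ≫ fres = 0 := by
        show (auxResComplex fres).d 1 0 ≫ fres = 0
        rw [auxResComplex_d_1_0]
        exact (Category.assoc _ _ _).trans ((_ ≫= kernel.condition _).trans Limits.comp_zero)
      have h2 := congrArg (fun (t : X.X 1 ⟶ kM) => t y) h
      exact h2
    have hd : ∀ y : X.X 1, dl y ∈ maximalIdeal R := by
      intro y
      have h0 := hcomp y
      rw [hfres_apply] at h0
      exact Ideal.Quotient.eq_zero_iff_mem.mp h0
    have hsurj' : ∀ a ∈ maximalIdeal R, ∃ y, dl y = a := by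
      intro a ha
      obtain ⟨y, hy⟩ := hex0 a (by
        rw [hfres_apply]
        exact Ideal.Quotient.eq_zero_iff_mem.mpr ha)
      refine ⟨y, ?_⟩
      show ((auxResComplex fres).d 1 0).hom y = a
      rw [auxResComplex_d_1_0]
      exact hy
    have hker : ∀ x : X.X 1, dl x = 0 → φl x = 0 := by
      intro x hx
      obtain ⟨y, hy⟩ := hex1 x hx
      have hy' : X.d 2 1 y = x := hy
      rw [← hy']
      exact hφ'el y
    obtain ⟨r, hr⟩ := aux_factor hpsi dl φl hd hsurj' hker
    let ψ₀ : X.X 0 ⟶ RM := ModuleCat.ofHom ((LinearMap.mul R R) r)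
    refine ⟨ψ₀, ?_⟩
    show (P.complex.linearYonedaObj R RM).d 0 1 ψ₀ = φ
    have hDd : (P.complex.linearYonedaObj R RM).d 0 1 ψ₀ = X.d 1 0 ≫ ψ₀ := by
      simp only [ChainComplex.linearYonedaObj_d]
      rfl
    rw [hDd]
    apply ModuleCat.hom_ext
    apply LinearMap.ext
    intro x
    exact (hr x).symm
  -- from `IsZero` deduce `Subsingleton`
  have hiso0 : (P.complex.linearYonedaObj R RM).homology 1 ≅ ModuleCat.of R PUnit :=
    hz.iso (ModuleCat.isZero_of_subsingleton _)
  exact Equiv.subsingleton (hiso0.toLinearEquiv.toEquiv)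

end ExtVanishing

/-! ### The core splitting argument -/

section Core

open IsLocalRing

theorem aux_core {R : Type u} {M : Type v} [CommRing R] [IsLocalRing R]
    (hdepth : DepthLEOne R) [AddCommGroup M] [Module R M] [Module.IsReflexive R M]
    (π : Module.End R M →ₗ[R] R) (g : Module.End R M) (hπ : π g = 1) :
    ∃ (f : M →ₗ[R] R) (m : M), f m = 1 := by
  by_contra hcon
  push_neg at hcon
  have hM : ∀ (f : M →ₗ[R] R) (m : M), f m ∈ maximalIdeal R := by
    intro f m
    rw [IsLocalRing.mem_maximalIdeal, mem_nonunits_iff]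
    intro hu
    refine hcon (((hu.unit⁻¹ : Rˣ) : R) • f) m ?_
    rw [LinearMap.smul_apply, smul_eq_mul]
    calc ((hu.unit⁻¹ : Rˣ) : R) * f m = ((hu.unit⁻¹ : Rˣ) : R) * (hu.unit : R) := by
          rw [IsUnit.unit_spec]
      _ = 1 := Units.inv_mul _
  obtain ⟨h1, h2⟩ := aux_key hM π g hπ
  rcases hdepth with h | h
  · obtain ⟨φ, φ', hne⟩ := h
    exact hne (by rw [h1 φ, h1 φ'])
  · have := aux_ext_one_subsingleton R h2
    rw [← not_nontrivial_iff_subsingleton] at this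
    exact this h

/-- Splitting off a free rank one summand from a pairing `f m = 1`. -/
noncomputable def auxSplitEquiv {R : Type u} {M : Type v} [CommRing R]
    [AddCommGroup M] [Module R M] (f : M →ₗ[R] R) (m : M) (hfm : f m = 1) :
    M ≃ₗ[R] (LinearMap.ker f) × R where
  toFun x := (⟨x - f x • m, by
      rw [LinearMap.mem_ker, map_sub, map_smul, hfm, smul_eq_mul, mul_one, sub_self]⟩, f x)
  map_add' x y := by
    refine Prod.ext (Subtype.ext ?_) (by simp)
    show (x + y) - f (x + y) • m = (x - f x • m) + (y - f y • m)
    rw [map_add, add_smul]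
    abel
  map_smul' c x := by
    refine Prod.ext (Subtype.ext ?_) (by simp)
    show c • x - f (c • x) • m = c • (x - f x • m)
    rw [map_smul, smul_sub, smul_eq_mul, mul_smul]
  invFun p := (p.1 : M) + p.2 • m
  left_inv x := by
    show (x - f x • m) + f x • m = x
    rw [sub_add_cancel]
  right_inv p := by
    obtain ⟨⟨n, hn⟩, r⟩ := p
    rw [LinearMap.mem_ker] at hn
    have hfn : f (n + r • m) = r := by
      rw [map_add, map_smul, hn, hfm, smul_eq_mul, mul_one, zero_add]
    refine Prod.ext (Subtype.ext ?_) (by simpa using hfn)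
    show (n + r • m) - f (n + r • m) • m = n
    rw [hfn, add_sub_cancel_right]

end Core

/-! ### Freeness of `M` from freeness of `End M` -/

section Induction

open IsLocalRing

variable {R : Type u} [CommRing R] [IsNoetherianRing R] [IsLocalRing R]

theorem aux_finite_end {M : Type v} [AddCommGroup M] [Module R M] [Module.Finite R M] :
    Module.Finite R (Module.End R M) := by
  obtain ⟨n, p, hp⟩ := Module.Finite.exists_fin' R M
  haveI : IsNoetherian R ((Fin n → R) →ₗ[R] M) := inferInstance
  refine Module.Finite.of_injective (LinearMap.lcomp R M p) ?_
  intro a b hab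
  apply LinearMap.ext
  intro x
  obtain ⟨y, rfl⟩ := hp x
  exact LinearMap.congr_fun hab y

theorem aux_partB (hdepth : DepthLEOne R) :
    ∀ (n : ℕ) (M : Type v) [AddCommGroup M] [Module R M] [Module.Finite R M]
      [Module.IsReflexive R M],
      Module.finrank (ResidueField R) (TensorProduct R (ResidueField R) M) ≤ n →
      Module.Free R (Module.End R M) → Module.Free R M := by
  intro n
  induction n with
  | zero =>
    intro M _ _ _ _ hrk _
    haveI : Subsingleton (TensorProduct R (ResidueField R) M) := by
      haveI : Module.Finite (ResidueField R) (TensorProduct R (ResidueField R) M) :=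
        Module.Finite.base_change R (ResidueField R) M
      exact Module.finrank_zero_iff.mp (le_antisymm hrk (Nat.zero_le _))
    haveI : Subsingleton M := (IsLocalRing.subsingleton_tensorProduct (R := R)).mp inferInstance
    exact Module.Free.of_subsingleton R M
  | succ n ih =>
    intro M _ _ _ _ hrk hfree
    by_cases hM : Subsingleton M
    · exact Module.Free.of_subsingleton R M
    haveI hnt : Nontrivial M := not_subsingleton_iff_nontrivial.mp hM
    haveI hEnd : Nontrivial (Module.End R M) := by
      refine ⟨LinearMap.id, 0, fun h => ?_⟩
      obtain ⟨m, hm⟩ := exists_ne (0 : M)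
      exact hm (by simpa using LinearMap.congr_fun h m)
    let b := Module.Free.chooseBasis R (Module.End R M)
    haveI : Nonempty (Module.Free.ChooseBasisIndex R (Module.End R M)) := b.index_nonempty
    let i₀ := Classical.arbitrary (Module.Free.ChooseBasisIndex R (Module.End R M))
    have hπg : b.coord i₀ (b i₀) = 1 := by simp
    obtain ⟨f, m, hfm⟩ := aux_core hdepth (b.coord i₀) (b i₀) hπg
    let e := auxSplitEquiv f m hfm
    let K := LinearMap.ker f
    let p : M →ₗ[R] K := (LinearMap.fst R K R).comp e.toLinearMap
    let i : K →ₗ[R] M := e.symm.toLinearMap.comp (LinearMap.inl R K R)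
    have hpi : ∀ x : K, p (i x) = x := by
      intro x
      show (e (e.symm ((x, 0) : K × R))).1 = x
      rw [e.apply_symm_apply]
    haveI hKfin : Module.Finite R K :=
      Module.Finite.of_surjective p (fun k => ⟨i k, hpi k⟩)
    haveI hKrefl : Module.IsReflexive R K :=
      Module.IsReflexive.of_split i p (LinearMap.ext hpi)
    -- `End K` is a direct summand of `End M`
    let ι₂ : Module.End R K →ₗ[R] Module.End R M :=
      { toFun := fun h => i ∘ₗ h ∘ₗ p
        map_add' := by
          intro h h'
          apply LinearMap.ext; intro x
          simp
        map_smul' := by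
          intro c h
          apply LinearMap.ext; intro x
          simp }
    let p₂ : Module.End R M →ₗ[R] Module.End R K :=
      { toFun := fun u => p ∘ₗ u ∘ₗ i
        map_add' := by
          intro u u'
          apply LinearMap.ext; intro x
          simp
        map_smul' := by
          intro c u
          apply LinearMap.ext; intro x
          simp }
    have hp₂ι₂ : p₂ ∘ₗ ι₂ = LinearMap.id := by
      apply LinearMap.ext; intro h
      apply LinearMap.ext; intro x
      show p (i (h (p (i x)))) = h x
      rw [hpi, hpi]
    haveI : Module.Projective R (Module.End R K) :=
      Module.Projective.of_split ι₂ p₂ hp₂ι₂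
    haveI : Module.Finite R (Module.End R M) := aux_finite_end
    haveI : Module.Finite R (Module.End R K) := by
      refine Module.Finite.of_surjective p₂ (fun h => ⟨ι₂ h, ?_⟩)
      exact LinearMap.congr_fun hp₂ι₂ h
    haveI : Module.Flat R (Module.End R K) := Module.Flat.of_projective
    haveI : Module.FinitePresentation R (Module.End R K) :=
      Module.finitePresentation_of_projective R (Module.End R K)
    haveI hfreeK : Module.Free R (Module.End R K) := Module.free_of_flat_of_isLocalRing
    -- the rank drops
    have halg : Function.Surjective (algebraMap R (ResidueField R)) := by
      rw [IsLocalRing.ResidueField.algebraMap_eq]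
      exact IsLocalRing.residue_surjective
    have hrkK : Module.finrank (ResidueField R) (TensorProduct R (ResidueField R) K) ≤ n := by
      let E : TensorProduct R (ResidueField R) M ≃ₗ[R]
          (TensorProduct R (ResidueField R) K) × (ResidueField R) :=
        (TensorProduct.congr (LinearEquiv.refl R (ResidueField R)) e).trans
          ((TensorProduct.prodRight R R (ResidueField R) K R).trans
            ((LinearEquiv.refl R (TensorProduct R (ResidueField R) K)).prodCongr (TensorProduct.rid R (ResidueField R))))
      let Ek : TensorProduct R (ResidueField R) M ≃ₗ[ResidueField R]
          (TensorProduct R (ResidueField R) K) × (ResidueField R) :=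
        E.extendScalarsOfSurjective halg
      have hfr := Ek.finrank_eq
      haveI : Module.Finite (ResidueField R) (TensorProduct R (ResidueField R) K) :=
        Module.Finite.base_change R (ResidueField R) K
      haveI : Module.Finite (ResidueField R) (TensorProduct R (ResidueField R) M) :=
        Module.Finite.base_change R (ResidueField R) M
      rw [Module.finrank_prod, Module.finrank_self] at hfr
      omega
    haveI : Module.Free R K := ih K hrkK hfreeK
    exact Module.Free.of_equiv e.symm

end Induction

/-- Let `(R,m,k)` be a commutative Noetherian local ring of depth at most 1 and `M` a finitely
generated reflexive `R`-module.  If `End_R(M)` has a nonzero free direct summand then so does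
`M`; consequently, if `End_R(M)` is a free `R`-module then `M` is a free `R`-module. -/
theorem free_summand_of_end_free_summand (R : Type u) (M : Type v) [CommRing R]
    [IsNoetherianRing R] [IsLocalRing R] (hdepth : DepthLEOne R)
    [AddCommGroup M] [Module R M] [Module.Finite R M] [Module.IsReflexive R M] :
    ((∃ (N : Type (max u v)) (_ : AddCommGroup N) (_ : Module R N),
        Nonempty (Module.End R M ≃ₗ[R] N × R)) →
      ∃ (N' : Type v) (_ : AddCommGroup N') (_ : Module R N'),
        Nonempty (M ≃ₗ[R] N' × R)) ∧
    (Module.Free R (Module.End R M) → Module.Free R M) := by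
  constructor
  · rintro ⟨N, _, _, ⟨e⟩⟩
    have hπg : ((LinearMap.snd R N R).comp e.toLinearMap) (e.symm (0, 1)) = 1 := by
      simp
    obtain ⟨f, m, hfm⟩ := aux_core hdepth ((LinearMap.snd R N R).comp e.toLinearMap)
      (e.symm (0, 1)) hπg
    exact ⟨LinearMap.ker f, inferInstance, inferInstance, ⟨auxSplitEquiv f m hfm⟩⟩
  · intro hfree
    exact aux_partB hdepth
      (Module.finrank (IsLocalRing.ResidueField R)
        (TensorProduct R (IsLocalRing.ResidueField R) M)) M le_rfl hfree
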